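/- Let E_1, E_2, G be complex Hilbert spaces, F_1,…,F_N ∈ B(G), U ∈ B(E_1,G), V ∈ B(E_2,G). For a word σ = i_1⋯i_k set F_σ = F_{i_1}∘⋯∘F_{i_k}, F_∅ = id. Assume: (a) for every g ∈ G the families (U* F_σ* g)_σ and (V* F_σ* g)_σ are square-summable and the induced maps U_∞ : G → ℓ²(F_N^+;E_1) and V_∞ : G → ℓ²(F_N^+;E_2) are bounded; (b) for every g ∈ G, Σ_{|σ|=k} ‖F_σ* g‖ → 0 as k → ∞. Then A_0 := U_∞* U_∞ − V_∞* V_∞ satisfies the displacement equation A_0 − Σ_{k=1}^N F_k A_0 F_k* = U U* − V V*, and A_0 is the unique bounded operator on G satisfying this equation. -/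

import Mathlib

set_option maxHeartbeats 1000000

noncomputable section

/-- Words over the alphabet `{1,…,N}`: the free monoid `F_N^+` (the empty list is `∅`). -/
abbrev Word (N : ℕ) := List (Fin N)

instance {N k : ℕ} : Fintype {σ : Word N // σ.length = k} :=
  (List.finite_length_eq (Fin N) k).fintype

local notation "⟪" x ", " y "⟫" => @inner ℂ _ _ x y

open ContinuousLinearMap in
/-- cons as an equivalence onto words of length `m+1`. -/
def consEquiv {N m : ℕ} :
    (Fin N × {σ : Word N // σ.length = m}) ≃ {σ : Word N // σ.length = m + 1} where
  toFun p := ⟨p.1 :: p.2.1, by simp [p.2.2]⟩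
  invFun σ := match σ with
    | ⟨a :: t, h⟩ => (a, ⟨t, by simpa using h⟩)
  left_inv p := rfl
  right_inv := fun ⟨σ, hσ⟩ => by
    cases σ with
    | nil => simp at hσ
    | cons a t => rfl

instance {N : ℕ} : Unique {σ : Word N // σ.length = 0} where
  default := ⟨[], rfl⟩
  uniq := fun ⟨σ, hσ⟩ => Subtype.ext (List.length_eq_zero_iff.mp hσ)

open ContinuousLinearMap in
/-- The operator `A₀ = U_∞* U_∞ − V_∞* V_∞` satisfies the displacement
equation `A₀ − ∑ₖ F_k A₀ F_k* = U U* − V V*` and is the unique bounded operator on `G`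
satisfying it. -/
theorem wave_displacement_unique {N : ℕ} (hN : 1 ≤ N)
    {E₁ E₂ G : Type*} [NormedAddCommGroup E₁] [InnerProductSpace ℂ E₁] [CompleteSpace E₁]
    [NormedAddCommGroup E₂] [InnerProductSpace ℂ E₂] [CompleteSpace E₂]
    [NormedAddCommGroup G] [InnerProductSpace ℂ G] [CompleteSpace G]
    (F : Fin N → G →L[ℂ] G)
    (U : E₁ →L[ℂ] G) (V : E₂ →L[ℂ] G)
    (Uinf : G →L[ℂ] lp (fun _ : Word N => E₁) 2)
    (Vinf : G →L[ℂ] lp (fun _ : Word N => E₂) 2)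
    (hU : ∀ (g : G) (σ : Word N),
      (Uinf g) σ =
        ContinuousLinearMap.adjoint U (ContinuousLinearMap.adjoint ((σ.map F).prod) g))
    (hV : ∀ (g : G) (σ : Word N),
      (Vinf g) σ =
        ContinuousLinearMap.adjoint V (ContinuousLinearMap.adjoint ((σ.map F).prod) g))
    (hlim : ∀ g : G,
      Filter.Tendsto
        (fun k : ℕ => ∑ σ : {σ : Word N // σ.length = k},
          ‖ContinuousLinearMap.adjoint ((σ.1.map F).prod) g‖)
        Filter.atTop (nhds 0)) :
    ((ContinuousLinearMap.adjoint Uinf ∘L Uinf - ContinuousLinearMap.adjoint Vinf ∘L Vinf)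
        - ∑ k : Fin N, F k ∘L
            ((ContinuousLinearMap.adjoint Uinf ∘L Uinf
                - ContinuousLinearMap.adjoint Vinf ∘L Vinf)
              ∘L ContinuousLinearMap.adjoint (F k))
      = U ∘L ContinuousLinearMap.adjoint U - V ∘L ContinuousLinearMap.adjoint V) ∧
    (∀ B : G →L[ℂ] G,
      (B - ∑ k : Fin N, F k ∘L (B ∘L ContinuousLinearMap.adjoint (F k))
          = U ∘L ContinuousLinearMap.adjoint U - V ∘L ContinuousLinearMap.adjoint V) →
      B = ContinuousLinearMap.adjoint Uinf ∘L Uinf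
            - ContinuousLinearMap.adjoint Vinf ∘L Vinf) := by
  classical
  set A₀ : G →L[ℂ] G := adjoint Uinf ∘L Uinf - adjoint Vinf ∘L Vinf with hA₀
  set t : G → G → Word N → ℂ := fun g h σ =>
    ⟪adjoint U (adjoint ((σ.map F).prod) g), adjoint U (adjoint ((σ.map F).prod) h)⟫
    - ⟪adjoint V (adjoint ((σ.map F).prod) g), adjoint V (adjoint ((σ.map F).prod) h)⟫
    with ht
  have hsum : ∀ g h : G, Summable (t g h) := by
    intro g h
    have h1 := lp.summable_inner (𝕜 := ℂ) (Uinf g) (Uinf h)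
    have h2 := lp.summable_inner (𝕜 := ℂ) (Vinf g) (Vinf h)
    refine (h1.sub h2).congr fun σ => ?_
    simp [ht, hU, hV]
  -- the key formula for the inner products of A₀
  have hkey : ∀ g h : G, ⟪g, A₀ h⟫ = ∑' σ : Word N, t g h σ := by
    intro g h
    have h0 : ⟪g, A₀ h⟫ = ⟪Uinf g, Uinf h⟫ - ⟪Vinf g, Vinf h⟫ := by
      simp [hA₀, ContinuousLinearMap.sub_apply, inner_sub_right,
        ContinuousLinearMap.adjoint_inner_right]
    rw [h0, lp.inner_eq_tsum, lp.inner_eq_tsum,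
      ← Summable.tsum_sub (lp.summable_inner (𝕜 := ℂ) (Uinf g) (Uinf h))
        (lp.summable_inner (𝕜 := ℂ) (Vinf g) (Vinf h))]
    exact tsum_congr fun σ => by simp [ht, hU, hV]
  -- cons compatibility
  have hcons : ∀ (g h : G) (k : Fin N) (σ : Word N),
      t (adjoint (F k) g) (adjoint (F k) h) σ = t g h (k :: σ) := by
    intro g h k σ
    simp only [ht]
    rw [List.map_cons, List.prod_cons, mul_def, adjoint_comp]
    rfl
  -- telescoping
  have htel : ∀ g h : G,
      (∑' σ : Word N, t g h σ)
        = t g h [] + ∑ k : Fin N, ∑' σ : Word N, t g h (k :: σ) := by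
    intro g h
    have hs := hsum g h
    have hc : Function.Injective (fun p : Fin N × Word N => p.1 :: p.2) := by
      intro p q hpq
      simp only [List.cons.injEq] at hpq
      exact Prod.ext hpq.1 hpq.2
    have hsp : Summable (fun p : Fin N × Word N => t g h (p.1 :: p.2)) :=
      hs.comp_injective hc
    rw [Summable.tsum_eq_add_tsum_ite hs []]
    congr 1
    have hsupp :
        Function.support (fun σ : Word N => if σ = [] then 0 else t g h σ)
          ⊆ Set.range (fun p : Fin N × Word N => p.1 :: p.2) := by
      intro σ hσ
      rcases σ with _ | ⟨a, s⟩
      · simp at hσ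
      · exact ⟨(a, s), rfl⟩
    have h1 := Function.Injective.tsum_eq hc hsupp
    have h2 : (∑' p : Fin N × Word N,
          (fun σ : Word N => if σ = [] then 0 else t g h σ) (p.1 :: p.2))
        = ∑' p : Fin N × Word N, t g h (p.1 :: p.2) :=
      tsum_congr fun p => by simp
    rw [← h1, h2, Summable.tsum_prod' hsp
      (fun k => hsp.comp_injective (fun s₁ s₂ hs' => by
        simpa using congrArg (fun p : Fin N × Word N => p.2) hs'))]
    · exact tsum_fintype _
  -- part 1: existence
  have hnil : ∀ g h : G, t g h [] = ⟪g, (U ∘L adjoint U - V ∘L adjoint V) h⟫ := by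
    intro g h
    simp [ht, ContinuousLinearMap.sub_apply, inner_sub_right, adjoint_inner_left,
      ContinuousLinearMap.one_def, ContinuousLinearMap.adjoint_id]
  have hFA : ∀ (g h : G) (k : Fin N),
      ⟪adjoint (F k) g, A₀ (adjoint (F k) h)⟫ = ∑' σ : Word N, t g h (k :: σ) := by
    intro g h k
    rw [hkey]
    exact tsum_congr fun σ => hcons g h k σ
  have hexist : A₀ - ∑ k : Fin N, F k ∘L (A₀ ∘L adjoint (F k))
      = U ∘L adjoint U - V ∘L adjoint V := by
    ext h
    refine ext_inner_left ℂ fun g => ?_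
    have lhs : ⟪g, (A₀ - ∑ k : Fin N, F k ∘L (A₀ ∘L adjoint (F k))) h⟫
        = ⟪g, A₀ h⟫ - ∑ k : Fin N, ⟪adjoint (F k) g, A₀ (adjoint (F k) h)⟫ := by
      simp [ContinuousLinearMap.sub_apply, ContinuousLinearMap.sum_apply,
        inner_sub_right, inner_sum, ContinuousLinearMap.comp_apply, adjoint_inner_left]
    rw [lhs, hkey, htel]
    rw [Finset.sum_congr rfl (fun k _ => hFA g h k)]
    rw [hnil]
    ring
  refine ⟨hexist, ?_⟩
  -- part 2: uniqueness
  intro B hB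
  set D : G →L[ℂ] G := B - A₀ with hD
  have hDeq : D = ∑ k : Fin N, F k ∘L (D ∘L adjoint (F k)) := by
    have h2 : B - ∑ k : Fin N, F k ∘L (B ∘L adjoint (F k))
        = A₀ - ∑ k : Fin N, F k ∘L (A₀ ∘L adjoint (F k)) := hB.trans hexist.symm
    have h3 : B - A₀ = (∑ k : Fin N, F k ∘L (B ∘L adjoint (F k)))
        - ∑ k : Fin N, F k ∘L (A₀ ∘L adjoint (F k)) :=
      sub_eq_sub_iff_sub_eq_sub.mp h2
    show B - A₀ = ∑ k : Fin N, F k ∘L ((B - A₀) ∘L adjoint (F k))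
    conv_lhs => rw [h3, ← Finset.sum_sub_distrib]
    exact Finset.sum_congr rfl fun k _ => by
      rw [← ContinuousLinearMap.comp_sub, ← ContinuousLinearMap.sub_comp]
  -- iterate
  have hiter : ∀ (m : ℕ) (g h : G),
      ⟪g, D h⟫ = ∑ σ : {σ : Word N // σ.length = m},
        ⟪adjoint ((σ.1.map F).prod) g, D (adjoint ((σ.1.map F).prod) h)⟫ := by
    intro m
    induction m with
    | zero =>
      intro g h
      rw [Fintype.sum_unique]
      show ⟪g, D h⟫ = ⟪adjoint ((([] : Word N).map F).prod) g,
        D (adjoint ((([] : Word N).map F).prod) h)⟫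
      simp [ContinuousLinearMap.one_def, ContinuousLinearMap.adjoint_id]
    | succ m ih =>
      intro g h
      have step : ⟪g, D h⟫ = ∑ k : Fin N, ⟪adjoint (F k) g, D (adjoint (F k) h)⟫ := by
        conv_lhs => rw [hDeq]
        simp [ContinuousLinearMap.sum_apply, inner_sum,
          ContinuousLinearMap.comp_apply, adjoint_inner_left]
      rw [step]
      calc ∑ k : Fin N, ⟪adjoint (F k) g, D (adjoint (F k) h)⟫
          = ∑ k : Fin N, ∑ σ : {σ : Word N // σ.length = m},
              ⟪adjoint (((k :: σ.1).map F).prod) g,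
                D (adjoint (((k :: σ.1).map F).prod) h)⟫ := by
            refine Finset.sum_congr rfl fun k _ => ?_
            rw [ih (adjoint (F k) g) (adjoint (F k) h)]
            refine Finset.sum_congr rfl fun σ _ => ?_
            have hp : adjoint (((k :: σ.1).map F).prod) =
                adjoint ((σ.1.map F).prod) ∘L adjoint (F k) := by
              rw [List.map_cons, List.prod_cons, mul_def, adjoint_comp]
            rw [hp]; rfl
        _ = ∑ p : Fin N × {σ : Word N // σ.length = m},
              ⟪adjoint (((consEquiv p).1.map F).prod) g,
                D (adjoint (((consEquiv p).1.map F).prod) h)⟫ := by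
            rw [Fintype.sum_prod_type]; rfl
        _ = ∑ σ : {σ : Word N // σ.length = m + 1},
              ⟪adjoint ((σ.1.map F).prod) g, D (adjoint ((σ.1.map F).prod) h)⟫ :=
            Fintype.sum_equiv consEquiv _ _ (fun p => rfl)
  -- the bound forces D = 0
  have hzero : ∀ g h : G, ⟪g, D h⟫ = 0 := by
    intro g h
    have hb : ∀ m : ℕ, ‖⟪g, D h⟫‖
        ≤ (∑ σ : {σ : Word N // σ.length = m}, ‖adjoint ((σ.1.map F).prod) g‖)
          * (‖D‖ * ∑ σ : {σ : Word N // σ.length = m}, ‖adjoint ((σ.1.map F).prod) h‖) := by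
      intro m
      rw [hiter m g h]
      calc ‖∑ σ : {σ : Word N // σ.length = m},
            ⟪adjoint ((σ.1.map F).prod) g, D (adjoint ((σ.1.map F).prod) h)⟫‖
          ≤ ∑ σ : {σ : Word N // σ.length = m},
            ‖⟪adjoint ((σ.1.map F).prod) g, D (adjoint ((σ.1.map F).prod) h)⟫‖ :=
            norm_sum_le _ _
        _ ≤ ∑ σ : {σ : Word N // σ.length = m}, ‖adjoint ((σ.1.map F).prod) g‖
              * (‖D‖ * ∑ τ : {σ : Word N // σ.length = m},
                  ‖adjoint ((τ.1.map F).prod) h‖) := by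
            refine Finset.sum_le_sum fun σ _ => ?_
            calc ‖⟪adjoint ((σ.1.map F).prod) g, D (adjoint ((σ.1.map F).prod) h)⟫‖
                ≤ ‖adjoint ((σ.1.map F).prod) g‖ * ‖D (adjoint ((σ.1.map F).prod) h)‖ :=
                  norm_inner_le_norm _ _
              _ ≤ ‖adjoint ((σ.1.map F).prod) g‖
                    * (‖D‖ * ‖adjoint ((σ.1.map F).prod) h‖) := by
                  gcongr
                  exact D.le_opNorm _
              _ ≤ _ := by
                  have hx : ‖adjoint ((σ.1.map F).prod) h‖
                      ≤ ∑ τ : {σ : Word N // σ.length = m},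
                          ‖adjoint ((τ.1.map F).prod) h‖ :=
                    Finset.single_le_sum
                      (f := fun τ : {σ : Word N // σ.length = m} =>
                        ‖adjoint ((τ.1.map F).prod) h‖)
                      (fun _ _ => norm_nonneg _) (Finset.mem_univ σ)
                  exact mul_le_mul_of_nonneg_left
                    (mul_le_mul_of_nonneg_left hx (norm_nonneg _)) (norm_nonneg _)
        _ = _ := by rw [← Finset.sum_mul]
    have hlim2 : Filter.Tendsto
        (fun m : ℕ =>
          (∑ σ : {σ : Word N // σ.length = m}, ‖adjoint ((σ.1.map F).prod) g‖)
          * (‖D‖ * ∑ σ : {σ : Word N // σ.length = m}, ‖adjoint ((σ.1.map F).prod) h‖))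
        Filter.atTop (nhds 0) := by
      have := (hlim g).mul ((hlim h).const_mul ‖D‖)
      simpa using this
    have hle : ‖⟪g, D h⟫‖ ≤ 0 := ge_of_tendsto' hlim2 hb
    simpa using norm_le_zero_iff.mp hle
  have hD0 : D = 0 := by
    ext h
    exact ext_inner_left ℂ fun g => by rw [hzero]; simp
  have : B = A₀ := by
    have := sub_eq_zero.mp (hD ▸ hD0)
    exact this
  exact this
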